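/- (Binomial Katona Theorem, even case.) Let ℓ ≥ 0 be an integer with w = 2ℓ < n, and suppose F ⊆ 2^[n] is w-union. Then ‖F‖_n ≤ ℓ + 1. -/

import Mathlib

open Finset

variable {n : ℕ}

def initSeg (σ : Equiv.Perm (Fin n)) (k : ℕ) : Finset (Fin n) :=
  (Finset.univ.filter fun j : Fin n => (j : ℕ) < k).image σ

lemma initSeg_mul (π σ : Equiv.Perm (Fin n)) (k : ℕ) :
    initSeg (π * σ) k = (initSeg σ k).image π := by
  simp only [initSeg, Finset.image_image]; rfl

-- existence of a permutation mapping A onto B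
lemma exists_perm_image {A B : Finset (Fin n)} (h : A.card = B.card) :
    ∃ π : Equiv.Perm (Fin n), A.image π = B := by
  classical
  let e : {x // x ∈ A} ≃ {x // x ∈ B} := Finset.equivOfCardEq h
  refine ⟨Equiv.extendSubtype e, ?_⟩
  apply Finset.eq_of_subset_of_card_le
  · intro x hx
    simp only [Finset.mem_image] at hx
    obtain ⟨a, ha, rfl⟩ := hx
    exact Equiv.extendSubtype_mem e a ha
  · rw [Finset.card_image_of_injective _ (Equiv.extendSubtype e).injective, h]

lemma count_const (k : ℕ) {A B : Finset (Fin n)} (h : A.card = B.card) :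
    (Finset.univ.filter fun σ : Equiv.Perm (Fin n) => initSeg σ k = A).card =
    (Finset.univ.filter fun σ : Equiv.Perm (Fin n) => initSeg σ k = B).card := by
  classical
  obtain ⟨π, hπ⟩ := exists_perm_image h
  apply Finset.card_nbij' (fun σ => π * σ) (fun σ => π⁻¹ * σ)
  · intro σ hσ
    simp only [Finset.mem_coe, Finset.mem_filter, Finset.mem_univ, true_and] at *
    rw [initSeg_mul, hσ, hπ]
  · intro σ hσ
    simp only [Finset.mem_coe, Finset.mem_filter, Finset.mem_univ, true_and] at *
    rw [initSeg_mul, hσ, ← hπ, Finset.image_image]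
    have : (⇑π⁻¹ ∘ ⇑π) = id := by ext x; simp
    rw [this, Finset.image_id]
  · intro σ _; group
  · intro σ _; group

lemma card_filter_lt' {k : ℕ} (h : k ≤ n) :
    (Finset.univ.filter fun j : Fin n => (j : ℕ) < k).card = k := by
  have hinj := Finset.card_image_of_injective
    (s := Finset.univ.filter fun j : Fin n => (j : ℕ) < k) (f := Fin.val) Fin.val_injective
  rw [← hinj]
  have himg : (Finset.univ.filter fun j : Fin n => (j : ℕ) < k).image Fin.val
      = Finset.range k := by
    ext x
    simp only [Finset.mem_image, Finset.mem_filter, Finset.mem_univ, true_and, Finset.mem_range]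
    constructor
    · rintro ⟨j, hj, rfl⟩; exact hj
    · intro hx; exact ⟨⟨x, lt_of_lt_of_le hx h⟩, hx, rfl⟩
  rw [himg, Finset.card_range]

lemma card_initSeg (σ : Equiv.Perm (Fin n)) {k : ℕ} (h : k ≤ n) :
    (initSeg σ k).card = k := by
  rw [initSeg, Finset.card_image_of_injective _ σ.injective, card_filter_lt' h]

lemma count_initSeg (A : Finset (Fin n)) :
    (Finset.univ.filter fun σ : Equiv.Perm (Fin n) => initSeg σ A.card = A).card
      * n.choose A.card = n.factorial := by
  classical
  have hAn : A.card ≤ n := by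
    simpa using Finset.card_le_card (Finset.subset_univ A)
  have hfib : (Finset.univ : Finset (Equiv.Perm (Fin n))).card =
      ∑ B ∈ Finset.powersetCard A.card (Finset.univ : Finset (Fin n)),
        (Finset.univ.filter fun σ : Equiv.Perm (Fin n) => initSeg σ A.card = B).card := by
    apply Finset.card_eq_sum_card_fiberwise
    intro σ _
    rw [Finset.mem_coe, Finset.mem_powersetCard]
    exact ⟨Finset.subset_univ _, card_initSeg σ hAn⟩
  have hconst : ∀ B ∈ Finset.powersetCard A.card (Finset.univ : Finset (Fin n)),
      (Finset.univ.filter fun σ : Equiv.Perm (Fin n) => initSeg σ A.card = B).card =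
      (Finset.univ.filter fun σ : Equiv.Perm (Fin n) => initSeg σ A.card = A).card := by
    intro B hB
    rw [Finset.mem_powersetCard] at hB
    exact count_const A.card hB.2
  rw [Finset.sum_congr rfl hconst, Finset.sum_const, Finset.card_powersetCard] at hfib
  simp only [Finset.card_univ, Fintype.card_fin, smul_eq_mul, Fintype.card_perm] at hfib
  rw [mul_comm]
  exact hfib.symm

lemma initSeg_mono (σ : Equiv.Perm (Fin n)) {k m : ℕ} (h : k ≤ m) :
    initSeg σ k ⊆ initSeg σ m := by
  apply Finset.image_subset_image
  intro x hx
  simp only [Finset.mem_filter, Finset.mem_univ, true_and] at *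
  omega

lemma key_bound {ℓ : ℕ} (hw : 2*ℓ < n) (G : Finset (Finset (Fin n)))
    (hu : ∀ A ∈ G, ∀ B ∈ G, (A ∪ B).card ≤ 2*ℓ) (σ : Equiv.Perm (Fin n)) :
    (G.filter fun A => initSeg σ A.card = A).card +
    (G.filter fun A => initSeg σ (n - A.card) = Aᶜ).card ≤ 2*ℓ + 2 := by
  classical
  set P := G.filter fun A => initSeg σ A.card = A with hP
  set Q := G.filter fun A => initSeg σ (n - A.card) = Aᶜ with hQ
  have hcard : ∀ A ∈ G, A.card ≤ 2*ℓ := by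
    intro A hA
    have := hu A hA A hA; simpa using this
  have hPinj : Set.InjOn Finset.card (P : Set (Finset (Fin n))) := by
    intro A hA B hB hAB
    simp only [hP, Finset.mem_coe, Finset.mem_filter] at hA hB
    rw [← hA.2, ← hB.2, hAB]
  have hQinj : Set.InjOn Finset.card (Q : Set (Finset (Fin n))) := by
    intro A hA B hB hAB
    simp only [hQ, Finset.mem_coe, Finset.mem_filter] at hA hB
    have h2 : Aᶜ = Bᶜ := by rw [← hA.2, ← hB.2, hAB]
    have := congrArg (·ᶜ) h2
    simpa using this
  have hPle : ∀ (m : ℕ), (∀ A ∈ P, A.card ≤ m) → P.card ≤ m + 1 := by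
    intro m hm
    have := Finset.card_le_card_of_injOn Finset.card
      (fun A hA => Finset.mem_range.2 (Nat.lt_succ_of_le (hm A hA))) hPinj
    simpa using this
  have hQle : ∀ (m : ℕ), (∀ A ∈ Q, A.card ≤ m) → Q.card ≤ m + 1 := by
    intro m hm
    have := Finset.card_le_card_of_injOn Finset.card
      (fun A hA => Finset.mem_range.2 (Nat.lt_succ_of_le (hm A hA))) hQinj
    simpa using this
  rcases P.eq_empty_or_nonempty with hPe | hPne
  · have : Q.card ≤ 2*ℓ + 1 := hQle (2*ℓ) (fun A hA => hcard A (Finset.mem_of_mem_filter A hA))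
    rw [hPe]
    simpa using le_trans this (by omega)
  rcases Q.eq_empty_or_nonempty with hQe | hQne
  · have : P.card ≤ 2*ℓ + 1 := hPle (2*ℓ) (fun A hA => hcard A (Finset.mem_of_mem_filter A hA))
    rw [hQe]
    simpa using le_trans this (by omega)
  obtain ⟨A₀, hA₀, hA₀max⟩ := Finset.exists_max_image P Finset.card hPne
  obtain ⟨B₀, hB₀, hB₀max⟩ := Finset.exists_max_image Q Finset.card hQne
  have hA₀G : A₀ ∈ G := Finset.mem_of_mem_filter A₀ hA₀
  have hB₀G : B₀ ∈ G := Finset.mem_of_mem_filter B₀ hB₀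
  have h1 : initSeg σ A₀.card = A₀ := (Finset.mem_filter.1 hA₀).2
  have h2 : initSeg σ (n - B₀.card) = B₀ᶜ := (Finset.mem_filter.1 hB₀).2
  have hab : A₀.card + B₀.card ≤ 2*ℓ := by
    rcases le_or_gt A₀.card (n - B₀.card) with hle | hlt
    · have hsub : A₀ ⊆ B₀ᶜ := by
        rw [← h1, ← h2]; exact initSeg_mono σ hle
      have hdisj : Disjoint A₀ B₀ := by
        apply Finset.disjoint_left.2
        intro x hx hxB
        have := hsub hx
        simp only [Finset.mem_compl] at this
        exact this hxB
      have := hu A₀ hA₀G B₀ hB₀G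
      rwa [Finset.card_union_of_disjoint hdisj] at this
    · exfalso
      have hsub : B₀ᶜ ⊆ A₀ := by
        rw [← h1, ← h2]; exact initSeg_mono σ (le_of_lt hlt)
      have huniv : A₀ ∪ B₀ = Finset.univ := by
        apply Finset.eq_univ_of_forall
        intro x
        by_cases hx : x ∈ B₀
        · exact Finset.mem_union_right _ hx
        · exact Finset.mem_union_left _ (hsub (Finset.mem_compl.2 hx))
      have := hu A₀ hA₀G B₀ hB₀G
      rw [huniv, Finset.card_univ, Fintype.card_fin] at this
      omega
  have := hPle A₀.card (fun A hA => hA₀max A hA)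
  have := hQle B₀.card (fun A hA => hB₀max A hA)
  omega

theorem fin_version {ℓ : ℕ} (hw : 2*ℓ < n) (G : Finset (Finset (Fin n)))
    (hu : ∀ A ∈ G, ∀ B ∈ G, (A ∪ B).card ≤ 2*ℓ) :
    ∑ A ∈ G, (1:ℝ)/(n.choose A.card) ≤ (ℓ:ℝ) + 1 := by
  classical
  set N : Finset (Fin n) → ℕ :=
    fun A => (Finset.univ.filter fun σ : Equiv.Perm (Fin n) => initSeg σ A.card = A).card with hNdef
  set M : Finset (Fin n) → ℕ :=
    fun A => (Finset.univ.filter fun σ : Equiv.Perm (Fin n) => initSeg σ (n - A.card) = Aᶜ).card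
    with hMdef
  have hAn : ∀ A : Finset (Fin n), A.card ≤ n := by
    intro A
    simpa using Finset.card_le_card (Finset.subset_univ A)
  have hN : ∀ A : Finset (Fin n), N A * n.choose A.card = n.factorial :=
    fun A => count_initSeg A
  have hM : ∀ A : Finset (Fin n), M A * n.choose A.card = n.factorial := by
    intro A
    have h1 := count_initSeg Aᶜ
    have h2 : Aᶜ.card = n - A.card := by
      rw [Finset.card_compl, Fintype.card_fin]
    rw [h2, Nat.choose_symm (hAn A)] at h1
    exact h1
  have hNM : ∀ A : Finset (Fin n), N A = M A := by
    intro A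
    have hc : 0 < n.choose A.card := Nat.choose_pos (hAn A)
    exact Nat.eq_of_mul_eq_mul_right hc ((hN A).trans (hM A).symm)
  -- sum swap
  have hswapN : ∑ A ∈ G, N A = ∑ σ : Equiv.Perm (Fin n),
      (G.filter fun A => initSeg σ A.card = A).card := by
    simp only [hNdef, Finset.card_filter]
    rw [Finset.sum_comm]
  have hswapM : ∑ A ∈ G, M A = ∑ σ : Equiv.Perm (Fin n),
      (G.filter fun A => initSeg σ (n - A.card) = Aᶜ).card := by
    simp only [hMdef, Finset.card_filter]
    rw [Finset.sum_comm]
  have hkey : ∑ A ∈ G, (N A + M A) ≤ n.factorial * (2*ℓ + 2) := by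
    rw [Finset.sum_add_distrib, hswapN, hswapM, ← Finset.sum_add_distrib]
    calc ∑ σ : Equiv.Perm (Fin n), ((G.filter fun A => initSeg σ A.card = A).card
            + (G.filter fun A => initSeg σ (n - A.card) = Aᶜ).card)
        ≤ ∑ _σ : Equiv.Perm (Fin n), (2*ℓ + 2) :=
          Finset.sum_le_sum fun σ _ => key_bound hw G hu σ
      _ = n.factorial * (2*ℓ+2) := by
          rw [Finset.sum_const, Finset.card_univ, Fintype.card_perm, Fintype.card_fin,
            smul_eq_mul]
  have hsumN : 2 * ∑ A ∈ G, N A ≤ n.factorial * (2*ℓ + 2) := by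
    have heq : ∑ A ∈ G, (N A + M A) = 2 * ∑ A ∈ G, N A := by
      rw [Finset.sum_add_distrib]
      have : ∑ A ∈ G, M A = ∑ A ∈ G, N A := Finset.sum_congr rfl fun A _ => (hNM A).symm
      rw [this]; ring
    rw [← heq]
    exact hkey
  -- to the reals
  have hfacpos : (0:ℝ) < n.factorial := by positivity
  have hone : ∀ A ∈ G, (1:ℝ)/(n.choose A.card) = (N A : ℝ) / n.factorial := by
    intro A _
    have hc : (0:ℝ) < n.choose A.card := by
      exact_mod_cast Nat.choose_pos (hAn A)
    have := hN A
    have hcast : (N A : ℝ) * n.choose A.card = n.factorial := by exact_mod_cast this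
    field_simp
    linarith [hcast]
  rw [Finset.sum_congr rfl hone, ← Finset.sum_div]
  rw [div_le_iff₀ hfacpos]
  have h3 : ((∑ A ∈ G, N A : ℕ) : ℝ) * 2 ≤ (2*(ℓ:ℝ) + 2) * n.factorial := by
    have h2 : (∑ A ∈ G, N A) * 2 ≤ (2*ℓ + 2) * n.factorial := by
      calc (∑ A ∈ G, N A) * 2 = 2 * ∑ A ∈ G, N A := by ring
        _ ≤ n.factorial * (2*ℓ + 2) := hsumN
        _ = (2*ℓ + 2) * n.factorial := by ring
    exact_mod_cast h2
  rw [← Nat.cast_sum]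
  linarith

/-- The binomial norm of a family `F` of subsets of `[n]`:
`‖F‖ₙ = ∑_{A ∈ F} 1 / C(n, |A|)`. -/
noncomputable def binNorm (n : ℕ) (F : Finset (Finset ℕ)) : ℝ :=
  ∑ A ∈ F, 1 / (n.choose A.card : ℝ)

def toFin (n : ℕ) (A : Finset ℕ) : Finset (Fin n) :=
  Finset.univ.filter fun i => (i : ℕ) ∈ A

lemma toFin_val_image {A : Finset ℕ} (h : A ⊆ Finset.range n) :
    (toFin n A).image Fin.val = A := by
  ext x
  simp only [toFin, Finset.mem_image, Finset.mem_filter, Finset.mem_univ, true_and]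
  constructor
  · rintro ⟨j, hj, rfl⟩; exact hj
  · intro hx
    exact ⟨⟨x, Finset.mem_range.1 (h hx)⟩, hx, rfl⟩

lemma toFin_card {A : Finset ℕ} (h : A ⊆ Finset.range n) : (toFin n A).card = A.card := by
  conv_rhs => rw [← toFin_val_image h]
  rw [Finset.card_image_of_injective _ Fin.val_injective]

lemma toFin_union (A B : Finset ℕ) : toFin n (A ∪ B) = toFin n A ∪ toFin n B := by
  ext x
  simp [toFin, Finset.mem_union]

theorem stmt_12 (n ℓ : ℕ) (hw : 2 * ℓ < n) (F : Finset (Finset ℕ))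
    (hsub : ∀ A ∈ F, A ⊆ Finset.range n)
    (hunion : ∀ A ∈ F, ∀ B ∈ F, (A ∪ B).card ≤ 2 * ℓ) :
    binNorm n F ≤ (ℓ : ℝ) + 1 := by
  classical
  set G : Finset (Finset (Fin n)) := F.image (toFin n) with hG
  have hinj : ∀ A ∈ F, ∀ B ∈ F, toFin n A = toFin n B → A = B := by
    intro A hA B hB h
    rw [← toFin_val_image (hsub A hA), ← toFin_val_image (hsub B hB), h]
  have hnorm : binNorm n F = ∑ B ∈ G, (1:ℝ)/(n.choose B.card) := by
    rw [hG, Finset.sum_image hinj, binNorm]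
    apply Finset.sum_congr rfl
    intro A hA
    rw [toFin_card (hsub A hA)]
  have hu : ∀ A ∈ G, ∀ B ∈ G, (A ∪ B).card ≤ 2*ℓ := by
    intro A hA B hB
    rw [hG, Finset.mem_image] at hA hB
    obtain ⟨A', hA', rfl⟩ := hA
    obtain ⟨B', hB', rfl⟩ := hB
    rw [← toFin_union, toFin_card (Finset.union_subset (hsub A' hA') (hsub B' hB'))]
    exact hunion A' hA' B' hB'
  rw [hnorm]
  exact fin_version hw G hu
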